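/- Given β₀, σ₀ ∈ (0,1), set γ₀ = (1−β₀)/100 and choose N₀ ∈ ℕ with σ₀^{N₀} ≤ (1−β₀)/100. Let f(z) = λz and g(z) = Λz with |λ| ≤ β₀|Λ| and |λ| ≤ σ₀, and let g̃ be a Möbius transformation whose inverse is a γ₀-deformation of g^{-1}(z)=Λ^{-1}z. Then for any r ∈ [0,1] such that g̃^{-1}(B(0,r)) is not contained in f^{-1}(B(0,r)), the sets f^{N₀}(B(0,r)) and g̃^{-1}(f^{N₀}(B(0,r))) are disjoint. -/

import Mathlib

private lemma aux_num (γ : ℝ) (h0 : 0 < γ) (h1 : γ < 1 / 100) :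
    (1 + 2 * γ) * γ + ((1 + γ) * (1 - 100 * γ)) * (1 + γ) ≤ 1 - 2 * γ := by
  nlinarith [sq_nonneg γ, mul_nonneg (mul_nonneg h0.le h0.le) h0.le]

/-- Lemma `l.aproximacao2`: if `G = g̃⁻¹` is a `γ₀`-deformation of `g⁻¹(z)=Λ⁻¹z`,
`|λ| ≤ β₀|Λ|`, `|λ| ≤ σ₀`, `γ₀ = (1−β₀)/100`, `σ₀^{N₀} ≤ (1−β₀)/100`, and
`g̃⁻¹(B(0,r)) ⊄ f⁻¹(B(0,r))` for some `r ∈ [0,1]` (where `f(z)=λz`), then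
`f^{N₀}(B(0,r)) = B(0,|λ|^{N₀}r)` and `g̃⁻¹(f^{N₀}(B(0,r)))` are disjoint. -/
theorem stmt6 (β₀ σ₀ : ℝ) (hβ : β₀ ∈ Set.Ioo (0:ℝ) 1) (hσ : σ₀ ∈ Set.Ioo (0:ℝ) 1)
    (N₀ : ℕ) (hN : σ₀ ^ N₀ ≤ (1 - β₀) / 100)
    (lam Lam a b c d : ℂ) (hlam : lam ≠ 0) (hLam : Lam ≠ 0)
    (h1 : ‖lam‖ ≤ β₀ * ‖Lam‖) (h2 : ‖lam‖ ≤ σ₀)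
    (hdefa : |‖a‖ / ‖Lam‖⁻¹ - 1| < (1 - β₀) / 100)
    (hdefb : ‖b‖ < (1 - β₀) / 100)
    (hdefc : ‖c‖ < (1 - β₀) / 100)
    (hdefd : |‖d‖ - 1| < (1 - β₀) / 100)
    (r : ℝ) (hr : r ∈ Set.Icc (0:ℝ) 1)
    (hnot : ¬ ((fun z : ℂ => (a * z + b) / (c * z + d)) '' Metric.closedBall 0 r
        ⊆ Metric.closedBall 0 (‖lam‖⁻¹ * r))) :
    Disjoint
      (Metric.closedBall (0:ℂ) (‖lam‖ ^ N₀ * r))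
      ((fun z : ℂ => (a * z + b) / (c * z + d)) ''
        Metric.closedBall (0:ℂ) (‖lam‖ ^ N₀ * r)) := by
  obtain ⟨hβ0, hβ1⟩ := hβ
  obtain ⟨hσ0, hσ1⟩ := hσ
  obtain ⟨hr0, hr1⟩ := hr
  set γ : ℝ := (1 - β₀) / 100 with hγdef
  have hγ0 : 0 < γ := by rw [hγdef]; linarith
  have hγ1 : γ < 1 / 100 := by rw [hγdef]; linarith
  have hβγ : β₀ = 1 - 100 * γ := by rw [hγdef]; ring
  clear_value γ
  have hl0 : 0 < ‖lam‖ := norm_pos_iff.mpr hlam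
  have hL0 : 0 < ‖Lam‖ := norm_pos_iff.mpr hLam
  set l := ‖lam‖ with hldef
  set L := ‖Lam‖ with hLdef
  have hl1 : l < 1 := lt_of_le_of_lt h2 hσ1
  have hA0 : 0 ≤ ‖a‖ := norm_nonneg a
  have hAL : ‖a‖ * L < 1 + γ := by
    have h := (abs_lt.1 hdefa).2
    rw [div_eq_mul_inv, inv_inv] at h
    linarith
  have hD1 : 1 - γ < ‖d‖ := by have := (abs_lt.1 hdefd).1; linarith
  have hD2 : ‖d‖ < 1 + γ := by have := (abs_lt.1 hdefd).2; linarith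
  -- denominator bounds
  have hden_lo : ∀ z : ℂ, ‖z‖ ≤ r → 1 - 2 * γ ≤ ‖c * z + d‖ := by
    intro z hz
    have hcz : ‖c * z‖ ≤ γ * r := by
      rw [norm_mul]
      exact mul_le_mul hdefc.le hz (norm_nonneg z) hγ0.le
    have htri : ‖d‖ ≤ ‖c * z + d‖ + ‖c * z‖ := by
      have h := norm_add_le (c * z + d) (-(c * z))
      simpa using h
    nlinarith
  have hden_hi : ∀ z : ℂ, ‖z‖ ≤ r → ‖c * z + d‖ ≤ 1 + 2 * γ := by
    intro z hz
    have hcz : ‖c * z‖ ≤ γ * r := by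
      rw [norm_mul]
      exact mul_le_mul hdefc.le hz (norm_nonneg z) hγ0.le
    have htri : ‖c * z + d‖ ≤ ‖c * z‖ + ‖d‖ :=
      norm_add_le _ _
    nlinarith
  -- extract witness from hnot
  rw [Set.not_subset] at hnot
  obtain ⟨y, hy1, hy2⟩ := hnot
  obtain ⟨z₀, hz₀, rfl⟩ := hy1
  rw [Metric.mem_closedBall, dist_zero_right] at hz₀
  rw [Metric.mem_closedBall, dist_zero_right, not_le] at hy2
  simp only at hy2 hz₀
  have hdz₀pos : 0 < ‖c * z₀ + d‖ := lt_of_lt_of_le (by linarith) (hden_lo z₀ hz₀)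
  rw [norm_div] at hy2
  have hX : l⁻¹ * r * (1 - 2 * γ) < ‖a * z₀ + b‖ := by
    rw [lt_div_iff₀ hdz₀pos] at hy2
    have h1' : l⁻¹ * r * (1 - 2 * γ) ≤ l⁻¹ * r * ‖c * z₀ + d‖ := by
      apply mul_le_mul_of_nonneg_left (hden_lo z₀ hz₀)
      positivity
    linarith
  -- key numeric facts
  set s : ℝ := l ^ N₀ * r with hsdef
  clear_value s
  have hs0 : 0 ≤ s := by rw [hsdef]; positivity
  have hlN : l ^ N₀ ≤ γ := by
    calc l ^ N₀ ≤ σ₀ ^ N₀ := pow_le_pow_left₀ hl0.le h2 N₀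
    _ ≤ γ := hN
  have hpow1 : l ^ N₀ ≤ 1 := pow_le_one₀ hl0.le hl1.le
  have hlN1 : l ^ N₀ * l ≤ γ := by
    have := mul_le_mul hlN hl1.le hl0.le hγ0.le
    linarith
  have hsr : s ≤ r := by
    have := mul_le_mul_of_nonneg_right hpow1 hr0
    rw [hsdef]; linarith
  have hAl : ‖a‖ * l ≤ (1 + γ) * β₀ := by
    have h3 : ‖a‖ * l ≤ ‖a‖ * (β₀ * L) :=
      mul_le_mul_of_nonneg_left h1 hA0
    nlinarith
  have hkey : (1 + 2 * γ) * s + ‖a‖ * (r + s) ≤ l⁻¹ * r * (1 - 2 * γ) := by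
    have expand : ((1 + 2 * γ) * s + ‖a‖ * (r + s)) * l
        = r * ((1 + 2 * γ) * (l ^ N₀ * l) + (‖a‖ * l) * (1 + l ^ N₀)) := by
      rw [hsdef]; ring
    have hfac : (1 + 2 * γ) * (l ^ N₀ * l) + (‖a‖ * l) * (1 + l ^ N₀)
        ≤ 1 - 2 * γ := by
      have h4 : (‖a‖ * l) * (1 + l ^ N₀) ≤ ((1 + γ) * β₀) * (1 + γ) := by
        have hp : (1 : ℝ) + l ^ N₀ ≤ 1 + γ := by linarith
        have hp0 : (0 : ℝ) ≤ 1 + l ^ N₀ := by positivity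
        have hr0' : (0 : ℝ) ≤ (1 + γ) * β₀ := by positivity
        exact mul_le_mul hAl hp hp0 hr0'
      have h5 : (1 + 2 * γ) * (l ^ N₀ * l) ≤ (1 + 2 * γ) * γ :=
        mul_le_mul_of_nonneg_left hlN1 (by linarith)
      have hnum : (1 + 2 * γ) * γ + ((1 + γ) * β₀) * (1 + γ) ≤ 1 - 2 * γ := by
        rw [hβγ]; exact aux_num γ hγ0 hγ1
      linarith
    have H : ((1 + 2 * γ) * s + ‖a‖ * (r + s)) * l ≤ r * (1 - 2 * γ) := by
      rw [expand]
      exact mul_le_mul_of_nonneg_left hfac hr0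
    have heq : l⁻¹ * r * (1 - 2 * γ) = r * (1 - 2 * γ) / l := by
      rw [div_eq_mul_inv]; ring
    rw [heq, le_div_iff₀ hl0]
    exact H
  -- main disjointness
  rw [Set.disjoint_left]
  rintro w hw ⟨u, hu, rfl⟩
  rw [Metric.mem_closedBall, dist_zero_right] at hw hu
  simp only at hw
  have hur : ‖u‖ ≤ r := le_trans hu hsr
  have hdu : 0 < ‖c * u + d‖ := lt_of_lt_of_le (by linarith) (hden_lo u hur)
  rw [norm_div, div_le_iff₀ hdu] at hw
  have hub : ‖a * u + b‖ ≤ s * (1 + 2 * γ) := by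
    have : s * ‖c * u + d‖ ≤ s * (1 + 2 * γ) :=
      mul_le_mul_of_nonneg_left (hden_hi u hur) hs0
    calc ‖a * u + b‖ ≤ s * ‖c * u + d‖ := hw
      _ ≤ s * (1 + 2 * γ) := this
  have hlb : ‖a * z₀ + b‖
      ≤ ‖a * u + b‖ + ‖a‖ * (r + s) := by
    have heq : a * z₀ + b = (a * u + b) + a * (z₀ - u) := by ring
    have htri : ‖a * z₀ + b‖
        ≤ ‖a * u + b‖ + ‖a * (z₀ - u)‖ := by
      rw [heq]; exact norm_add_le _ _
    have h6 : ‖a * (z₀ - u)‖ ≤ ‖a‖ * (r + s) := by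
      rw [norm_mul]
      have h7 : ‖z₀ - u‖ ≤ r + s := by
        have h8 : ‖z₀ - u‖ ≤ ‖z₀‖ + ‖u‖ := by
          have := norm_add_le z₀ (-u)
          simpa [sub_eq_add_neg] using this
        linarith
      exact mul_le_mul_of_nonneg_left h7 hA0
    linarith
  linarith
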